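/- Let G be a directed graph with no 2-cycles and triangle-free skeleton, and suppose Ḡ satisfies skeleton(G) ⊆ Ḡ ⊆ moral(G). If an edge-removal procedure applied to the triangles of Ḡ removes exactly one edge from each triangle and never removes an edge of skeleton(G) from a triangle where the coparent edge is removable, then the resulting graph equals skeleton(G). -/

import Mathlib

/-- Directed graphs are binary relations `E : V → V → Prop`.
The skeleton of a directed graph: undirected graph forgetting orientations. -/
def skeleton {V : Type*} (E : V → V → Prop) : SimpleGraph V where
  Adj i j := i ≠ j ∧ (E i j ∨ E j i)
  symm := ⟨fun _ _ ⟨h, h2⟩ => ⟨h.symm, h2.symm⟩⟩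
  loopless := ⟨fun _ ⟨h, _⟩ => h rfl⟩

/-- The moral graph: skeleton plus edges between coparents (vertices sharing a common child). -/
def moral {V : Type*} (E : V → V → Prop) : SimpleGraph V where
  Adj i j := i ≠ j ∧ (E i j ∨ E j i ∨ ∃ k, E i k ∧ E j k)
  symm := ⟨fun _ _ ⟨h, h2⟩ => ⟨h.symm, by tauto⟩⟩
  loopless := ⟨fun _ ⟨h, _⟩ => h rfl⟩

/-- No 2-cycles (unidirectional): no pair connected by edges in both directions. -/
def No2Cycles {V : Type*} (E : V → V → Prop) : Prop := ∀ i j, E i j → ¬ E j i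

/-- Triangle-freeness of an undirected graph: no three mutually adjacent vertices. -/
def TriFree {V : Type*} (G : SimpleGraph V) : Prop :=
  ∀ a b c : V, G.Adj a b → G.Adj b c → G.Adj a c → False

/-- Abstract edge-removal procedure: if every edge of `Ḡ` not in the skeleton
is removable, exactly one edge of each triangle of `Ḡ` is removable, and every
non-skeleton edge of `Ḡ` lies in a triangle of `Ḡ`, then deleting from `Ḡ` the
removable edges lying in triangles yields exactly the skeleton of `G`. -/
theorem stmt_14 {V : Type*} (E : V → V → Prop) (Gbar : SimpleGraph V)
    (removable : V → V → Prop)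
    (hNC : No2Cycles E) (hTF : TriFree (skeleton E))
    (hlow : skeleton E ≤ Gbar) (hup : Gbar ≤ moral E)
    (hfp : ∀ i j, Gbar.Adj i j → ¬ (skeleton E).Adj i j → removable i j)
    (hone : ∀ i j k, Gbar.Adj i j → Gbar.Adj j k → Gbar.Adj i k →
      ((removable i j ∧ ¬ removable j k ∧ ¬ removable i k) ∨
       (¬ removable i j ∧ removable j k ∧ ¬ removable i k) ∨
       (¬ removable i j ∧ ¬ removable j k ∧ removable i k)))
    (htri : ∀ i j, Gbar.Adj i j → ¬ (skeleton E).Adj i j →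
      ∃ k, Gbar.Adj i k ∧ Gbar.Adj j k) :
    ∀ i j, (Gbar.Adj i j ∧
        ¬ (removable i j ∧ ∃ k, Gbar.Adj i k ∧ Gbar.Adj j k)) ↔
      (skeleton E).Adj i j := by
  intro i j
  constructor
  · rintro ⟨hG, hnr⟩
    by_contra hns
    exact hnr ⟨hfp i j hG hns, htri i j hG hns⟩
  · intro hs
    refine ⟨hlow hs, ?_⟩
    rintro ⟨hrij, k, hik, hjk⟩
    rcases hone i j k (hlow hs) hjk hik with ⟨_, h2, h3⟩ | ⟨h1, _, _⟩ | ⟨h1, _, _⟩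
    ·
      -- need: one of ik, jk not skeleton
      by_cases hsk : (skeleton E).Adj i k
      · by_cases hsk2 : (skeleton E).Adj j k
        · exact hTF i k j hsk hsk2.symm hs
        · exact h2 (hfp j k hjk hsk2)
      · exact h3 (hfp i k hik hsk)
    · exact h1 hrij
    · exact h1 hrij
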